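/- Let p be a prime and e ≥ 1. The group O(A_{U(p^e)}) of isometries of the discriminant form of U(p^e) consists exactly of the matrices diag(a, a⁻¹) and antidiag(b, b⁻¹) for a, b ∈ (ℤ/p^eℤ)^×; in particular |O(A_{U(p^e)})| = 2·φ(p^e), where φ is Euler's totient function. -/
import Mathlib

theorem stmt13_unit_iff (p e : ℕ) (hp : p.Prime) (he : 1 ≤ e) (x : ZMod (p^e)) :
    IsUnit x ↔ ¬ (p ∣ x.val) := by
  haveI : NeZero (p^e) := ⟨pow_ne_zero e hp.ne_zero⟩
  conv_lhs => rw [show x = (x.val : ZMod (p^e)) from (ZMod.natCast_zmod_val x).symm]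
  rw [ZMod.isUnit_iff_coprime, Nat.coprime_pow_right_iff he, Nat.coprime_comm]
  exact hp.coprime_iff_not_dvd

theorem stmt13_local (p e : ℕ) (hp : p.Prime) (he : 1 ≤ e) {a b : ZMod (p^e)}
    (h : a + b = 1) : IsUnit a ∨ IsUnit b := by
  haveI : NeZero (p^e) := ⟨pow_ne_zero e hp.ne_zero⟩
  by_contra hc
  push_neg at hc
  obtain ⟨ha, hb⟩ := hc
  rw [stmt13_unit_iff p e hp he, not_not] at ha hb
  have h1 : p ∣ (a + b).val := by
    rw [ZMod.val_add, Nat.dvd_mod_iff (dvd_pow_self p (by omega))]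
    exact Nat.dvd_add ha hb
  rw [h, ZMod.val_one_eq_one_mod] at h1
  have hlt : 1 < p ^ e := Nat.one_lt_pow (by omega) hp.one_lt
  rw [Nat.mod_eq_of_lt hlt] at h1
  exact hp.one_lt.ne' (Nat.dvd_one.mp h1)

theorem stmt13_iff (p : ℕ) (hp : p.Prime) (e : ℕ) (he : 1 ≤ e) (a b c d : ZMod (p ^ e)) :
    (a * d + b * c = 1 ∧ a * b = 0 ∧ c * d = 0 ∧ IsUnit (a * d - b * c)) ↔
      ((b = 0 ∧ c = 0 ∧ a * d = 1) ∨ (a = 0 ∧ d = 0 ∧ b * c = 1)) := by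
  haveI : NeZero (p^e) := ⟨pow_ne_zero e hp.ne_zero⟩
  constructor
  · rintro ⟨h1, h2, h3, -⟩
    rcases stmt13_local p e hp he h1 with h | h
    · have ha := isUnit_of_mul_isUnit_left h
      have hd := isUnit_of_mul_isUnit_right h
      obtain ⟨u, hu⟩ := ha
      have hb : b = 0 := by
        have := congrArg (fun x => (↑u⁻¹ : ZMod (p^e)) * x) h2
        simpa [← hu, mul_comm, mul_assoc, mul_left_comm] using this
      have hc : c = 0 := by
        obtain ⟨v, hv⟩ := hd
        have := congrArg (fun x => x * (↑v⁻¹ : ZMod (p^e))) h3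
        simpa [← hv, mul_assoc] using this
      refine Or.inl ⟨hb, hc, ?_⟩
      simpa [hb, hc] using h1
    · have hb := isUnit_of_mul_isUnit_left h
      have hc := isUnit_of_mul_isUnit_right h
      have ha : a = 0 := by
        obtain ⟨u, hu⟩ := hb
        have := congrArg (fun x => x * (↑u⁻¹ : ZMod (p^e))) h2
        simpa [← hu, mul_assoc] using this
      have hd : d = 0 := by
        obtain ⟨u, hu⟩ := hc
        have := congrArg (fun x => (↑u⁻¹ : ZMod (p^e)) * x) h3
        simpa [← hu, mul_comm, mul_assoc, mul_left_comm] using this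
      refine Or.inr ⟨ha, hd, ?_⟩
      simpa [ha, hd] using h1
  · rintro (⟨hb, hc, had⟩ | ⟨ha, hd, hbc⟩)
    · refine ⟨by simp [hb, hc, had], by simp [hb], by simp [hc], ?_⟩
      simp [hb, hc, had]
    · refine ⟨by simp [ha, hd, hbc], by simp [ha], by simp [hd], ?_⟩
      simp only [ha, hd, zero_mul, mul_zero, zero_sub]
      rw [hbc]
      exact isUnit_one.neg

theorem stmt_13 (p : ℕ) (hp : p.Prime) (e : ℕ) (he : 1 ≤ e) :
    (∀ a b c d : ZMod (p ^ e),
      (a * d + b * c = 1 ∧ a * b = 0 ∧ c * d = 0 ∧ IsUnit (a * d - b * c)) ↔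
        ((b = 0 ∧ c = 0 ∧ a * d = 1) ∨ (a = 0 ∧ d = 0 ∧ b * c = 1))) ∧
    Nat.card {q : ZMod (p ^ e) × ZMod (p ^ e) × ZMod (p ^ e) × ZMod (p ^ e) //
        q.1 * q.2.2.2 + q.2.1 * q.2.2.1 = 1 ∧ q.1 * q.2.1 = 0 ∧
        q.2.2.1 * q.2.2.2 = 0 ∧ IsUnit (q.1 * q.2.2.2 - q.2.1 * q.2.2.1)}
      = 2 * Nat.totient (p ^ e) := by
  haveI : NeZero (p^e) := ⟨pow_ne_zero e hp.ne_zero⟩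
  haveI : Nontrivial (ZMod (p^e)) := by
    have : 1 < p ^ e := Nat.one_lt_pow (by omega) hp.one_lt
    exact ZMod.nontrivial_iff.mpr (by omega)
  refine ⟨stmt13_iff p hp e he, ?_⟩
  have key := stmt13_iff p hp e he
  let S := {q : ZMod (p ^ e) × ZMod (p ^ e) × ZMod (p ^ e) × ZMod (p ^ e) //
        q.1 * q.2.2.2 + q.2.1 * q.2.2.1 = 1 ∧ q.1 * q.2.1 = 0 ∧
        q.2.2.1 * q.2.2.2 = 0 ∧ IsUnit (q.1 * q.2.2.2 - q.2.1 * q.2.2.1)}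
  let f : (ZMod (p^e))ˣ ⊕ (ZMod (p^e))ˣ → S := fun x =>
    match x with
    | Sum.inl u => ⟨(u, 0, 0, (u⁻¹ : (ZMod (p^e))ˣ)), by
        simp [u.mul_inv]⟩
    | Sum.inr u => ⟨(0, u, (u⁻¹ : (ZMod (p^e))ˣ), 0), by
        refine ⟨by simp [u.mul_inv], by simp, by simp, ?_⟩
        simp only [zero_mul, mul_zero, zero_sub, u.mul_inv]
        exact isUnit_one.neg⟩
  have hunit_ne : ∀ u : (ZMod (p^e))ˣ, (u : ZMod (p^e)) ≠ 0 := fun u h => by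
    have hm := u.mul_inv
    rw [h, zero_mul] at hm
    exact zero_ne_one hm
  have hbij : Function.Bijective f := by
    constructor
    · rintro (u | u) (v | v) h <;>
        (simp only [f] at h; rw [Subtype.mk.injEq] at h; simp only [Prod.mk.injEq] at h)
      · exact congrArg Sum.inl (Units.ext h.1)
      · exact absurd h.1 (hunit_ne u)
      · exact absurd h.1.symm (hunit_ne v)
      · exact congrArg Sum.inr (Units.ext h.2.1)
    · rintro ⟨⟨a, b, c, d⟩, hq⟩
      rcases (key a b c d).mp hq with ⟨hb, hc, had⟩ | ⟨ha, hd, hbc⟩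
      · refine ⟨Sum.inl ⟨a, d, had, by rw [mul_comm]; exact had⟩, ?_⟩
        simp only [f]
        rw [Subtype.mk.injEq]
        simp only [Prod.mk.injEq]
        exact ⟨trivial, hb.symm, hc.symm, rfl⟩
      · refine ⟨Sum.inr ⟨b, c, hbc, by rw [mul_comm]; exact hbc⟩, ?_⟩
        simp only [f]
        rw [Subtype.mk.injEq]
        simp only [Prod.mk.injEq]
        exact ⟨ha.symm, trivial, rfl, hd.symm⟩
  have := Nat.card_eq_of_bijective f hbij
  rw [← this, Nat.card_sum, Nat.card_eq_fintype_card, ZMod.card_units_eq_totient]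
  ring
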